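/- Let G : ℓ²(ℕ, ℝ^m) → ℓ²(ℕ, ℝ^p), Ψ₁₁ : ℓ²(ℕ, ℝ^m) → ℓ²(ℕ, ℝ^m), Ψ₁₂ : ℓ²(ℕ, ℝ^p) → ℓ²(ℕ, ℝ^m), Ψ₂₁ : ℓ²(ℕ, ℝ^m) → ℓ²(ℕ, ℝ^{r₂}) and Ψ₂₂ : ℓ²(ℕ, ℝ^p) → ℓ²(ℕ, ℝ^{r₂}) be bounded causal linear operators. Assume Ψ₁₁ is bijective with bounded causal inverse Ψ₁₁⁻¹, and assume the operator norm ‖Ψ₁₂ ∘ G ∘ Ψ₁₁⁻¹‖ < 1. Then Ψ₁₁ + Ψ₁₂ ∘ G is bijective with bounded causal inverse, and the transformed system G̃ := (Ψ₂₁ + Ψ₂₂ ∘ G) ∘ (Ψ₁₁ + Ψ₁₂ ∘ G)⁻¹ is a bounded causal linear operator from ℓ²(ℕ, ℝ^m) to ℓ²(ℕ, ℝ^{r₂}). -/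

import Mathlib

open Matrix Finset

/-- The Hilbert space `ℓ²(ℕ, ℝ^q)`. -/
noncomputable abbrev ell2 (q : ℕ) := lp (fun _ : ℕ => EuclideanSpace ℝ (Fin q)) 2

/-- The truncation operator `P_n`: it sets all entries `x_k` with `k > n` to zero. -/
noncomputable def truncP (q n : ℕ) (x : ell2 q) : ell2 q :=
  ⟨fun k => if k ≤ n then x k else 0, by
    refine Memℓp.of_exponent_ge (memℓp_zero ?_) (zero_le)
    refine Set.Finite.subset (Set.finite_Iic n) ?_
    intro k hk
    by_contra h
    simp only [Set.mem_Iic, not_le] at h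
    exact hk (if_neg (by omega))⟩

/-- A bounded linear operator `T : ℓ²(ℕ, ℝ^a) → ℓ²(ℕ, ℝ^b)` is causal if
`P_n ∘ T = P_n ∘ T ∘ P_n` for every `n`. -/
def Causal {a b : ℕ} (T : ell2 a →L[ℝ] ell2 b) : Prop :=
  ∀ n : ℕ, ∀ x : ell2 a, truncP b n (T x) = truncP b n (T (truncP a n x))


lemma truncP_apply (q n : ℕ) (x : ell2 q) (k : ℕ) :
    (truncP q n x : ∀ _ : ℕ, EuclideanSpace ℝ (Fin q)) k = if k ≤ n then x k else 0 := rfl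

lemma truncP_norm_le (q n : ℕ) (x : ell2 q) : ‖truncP q n x‖ ≤ ‖x‖ := by
  refine lp.norm_le_of_tsum_le (by norm_num) (norm_nonneg x) ?_
  have h1 : ∑' k, ‖x k‖ ^ (2 : ENNReal).toReal = ‖x‖ ^ (2 : ENNReal).toReal :=
    (lp.norm_rpow_eq_tsum (by norm_num) x).symm
  rw [← h1]
  refine Summable.tsum_le_tsum (fun k => ?_) ((lp.memℓp _).summable (by norm_num))
    ((lp.memℓp x).summable (by norm_num))
  rw [truncP_apply]
  split
  · exact le_refl _
  · simp only [norm_zero]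
    rw [Real.zero_rpow (by norm_num)]
    positivity

/-- Truncation as a continuous linear map. -/
noncomputable def truncCLM (q n : ℕ) : ell2 q →L[ℝ] ell2 q :=
  LinearMap.mkContinuous
    { toFun := truncP q n
      map_add' := fun x y => by
        apply lp.ext
        funext k
        simp only [truncP_apply, lp.coeFn_add, Pi.add_apply]
        split <;> simp
      map_smul' := fun c x => by
        apply lp.ext
        funext k
        simp only [truncP_apply, lp.coeFn_smul, Pi.smul_apply, RingHom.id_apply]
        split <;> simp }
    1 (fun x => by simpa using truncP_norm_le q n x)

lemma truncCLM_eq (q n : ℕ) (x : ell2 q) : truncCLM q n x = truncP q n x := rfl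

set_option synthInstance.maxHeartbeats 1000000 in
lemma isClosed_causal {a b : ℕ} : IsClosed {T : ell2 a →L[ℝ] ell2 b | Causal T} := by
  have : {T : ell2 a →L[ℝ] ell2 b | Causal T} =
      ⋂ (n : ℕ) (x : ell2 a),
        {T | truncCLM b n (T x) = truncCLM b n (T (truncP a n x))} := by
    ext T
    simp only [Set.mem_iInter, Set.mem_setOf_eq, Causal, truncCLM_eq]
  rw [this]
  refine isClosed_iInter fun n => isClosed_iInter fun x => isClosed_eq ?_ ?_
  · exact (truncCLM b n).continuous.comp (ContinuousLinearMap.apply ℝ (ell2 b) x).continuous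
  · exact (truncCLM b n).continuous.comp
      (ContinuousLinearMap.apply ℝ (ell2 b) (truncP a n x)).continuous

lemma causal_id {a : ℕ} : Causal (ContinuousLinearMap.id ℝ (ell2 a)) := by
  intro n x
  simp only [ContinuousLinearMap.id_apply]
  apply lp.ext
  funext k
  simp only [truncP_apply]
  split <;> rfl

lemma Causal.comp {a b c : ℕ} {S : ell2 b →L[ℝ] ell2 c} {T : ell2 a →L[ℝ] ell2 b}
    (hS : Causal S) (hT : Causal T) : Causal (S.comp T) := by
  intro n x
  simp only [ContinuousLinearMap.comp_apply]
  rw [hS n (T x), hT n x, ← hS n (T (truncP a n x))]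

lemma Causal.add {a b : ℕ} {S T : ell2 a →L[ℝ] ell2 b}
    (hS : Causal S) (hT : Causal T) : Causal (S + T) := by
  intro n x
  simp only [ContinuousLinearMap.add_apply, ← truncCLM_eq, map_add]
  rw [truncCLM_eq, truncCLM_eq, truncCLM_eq, truncCLM_eq, hS n x, hT n x]
  rfl

lemma Causal.neg {a b : ℕ} {T : ell2 a →L[ℝ] ell2 b} (hT : Causal T) : Causal (-T) := by
  intro n x
  simp only [ContinuousLinearMap.neg_apply, ← truncCLM_eq, map_neg]
  rw [truncCLM_eq, truncCLM_eq, hT n x]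
  rfl

lemma Causal.pow {a : ℕ} {T : ell2 a →L[ℝ] ell2 a} (hT : Causal T) (k : ℕ) :
    Causal (T ^ k) := by
  induction k with
  | zero => simpa [ContinuousLinearMap.one_def] using causal_id
  | succ k ih => rw [pow_succ, ContinuousLinearMap.mul_def]; exact ih.comp hT

lemma Causal.sum {a b : ℕ} {ι : Type*} (s : Finset ι) (f : ι → (ell2 a →L[ℝ] ell2 b))
    (hf : ∀ i, Causal (f i)) : Causal (∑ i ∈ s, f i) := by
  classical
  induction s using Finset.induction_on with
  | empty =>
    intro n x
    simp only [Finset.sum_empty, ContinuousLinearMap.zero_apply, ← truncCLM_eq, map_zero]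
  | @insert a s h ih => rw [Finset.sum_insert h]; exact (hf _).add ih

/-- if `Ψ₁₁` has a bounded causal inverse and `‖Ψ₁₂ ∘ G ∘ Ψ₁₁⁻¹‖ < 1`, then
`Ψ₁₁ + Ψ₁₂ ∘ G` has a bounded causal inverse `Φ`, and the transformed system
`G̃ = (Ψ₂₁ + Ψ₂₂ ∘ G) ∘ Φ` is a bounded causal linear operator. -/
theorem statement9 {m p r₂ : ℕ}
    (G : ell2 m →L[ℝ] ell2 p) (Ψ11 : ell2 m →L[ℝ] ell2 m) (Ψ12 : ell2 p →L[ℝ] ell2 m)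
    (Ψ21 : ell2 m →L[ℝ] ell2 r₂) (Ψ22 : ell2 p →L[ℝ] ell2 r₂)
    (hG : Causal G) (h11 : Causal Ψ11) (h12 : Causal Ψ12) (h21 : Causal Ψ21) (h22 : Causal Ψ22)
    (Ψinv : ell2 m →L[ℝ] ell2 m) (hinv : Causal Ψinv)
    (hleft : Ψ11.comp Ψinv = ContinuousLinearMap.id ℝ (ell2 m))
    (hright : Ψinv.comp Ψ11 = ContinuousLinearMap.id ℝ (ell2 m))
    (hnorm : ‖Ψ12.comp (G.comp Ψinv)‖ < 1) :
    ∃ Φ : ell2 m →L[ℝ] ell2 m, Causal Φ ∧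
      (Ψ11 + Ψ12.comp G).comp Φ = ContinuousLinearMap.id ℝ (ell2 m) ∧
      Φ.comp (Ψ11 + Ψ12.comp G) = ContinuousLinearMap.id ℝ (ell2 m) ∧
      Causal ((Ψ21 + Ψ22.comp G).comp Φ) := by
  classical
  set A : ell2 m →L[ℝ] ell2 m := Ψ12.comp (G.comp Ψinv) with hA
  have hA_causal : Causal A := Causal.comp h12 (Causal.comp hG hinv)
  have hnegA : ‖(-A : ell2 m →L[ℝ] ell2 m)‖ < 1 := by rwa [norm_neg]
  set u : (ell2 m →L[ℝ] ell2 m)ˣ := Units.oneSub (-A) hnegA with hu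
  have huval : (u : ell2 m →L[ℝ] ell2 m) = 1 + A := by
    simp [hu, Units.oneSub, sub_neg_eq_add]
  -- causality of the inverse (Neumann series)
  have hsummable : Summable fun k : ℕ => (-A) ^ k :=
    summable_geometric_of_norm_lt_one hnegA
  have hinv_causal : Causal (↑u⁻¹ : ell2 m →L[ℝ] ell2 m) := by
    have huinv : (↑u⁻¹ : ell2 m →L[ℝ] ell2 m) = ∑' k : ℕ, (-A) ^ k := rfl
    rw [huinv]
    have htend := hsummable.hasSum
    refine isClosed_causal.mem_of_tendsto htend (Filter.Eventually.of_forall fun s => ?_)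
    exact Causal.sum s _ (fun k => (hA_causal.neg).pow k)
  -- factorization: Ψ11 + Ψ12 ∘ G = (1 + A) * Ψ11
  have hfact : Ψ11 + Ψ12.comp G = (1 + A) * Ψ11 := by
    have h1 : A * Ψ11 = Ψ12.comp G := by
      simp only [hA, ContinuousLinearMap.mul_def, ContinuousLinearMap.comp_assoc, hright]
      rfl
    rw [add_mul, one_mul, h1]
  refine ⟨Ψinv.comp (↑u⁻¹ : ell2 m →L[ℝ] ell2 m), Causal.comp hinv hinv_causal, ?_, ?_, ?_⟩
  · show (Ψ11 + Ψ12.comp G) * (Ψinv * ↑u⁻¹) = 1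
    rw [hfact]
    have h2 : Ψ11 * Ψinv = 1 := hleft
    rw [mul_assoc (1 + A) Ψ11, ← mul_assoc Ψ11 Ψinv, h2, one_mul, ← huval, u.mul_inv]
  · show (Ψinv * ↑u⁻¹) * (Ψ11 + Ψ12.comp G) = 1
    rw [hfact]
    have h2 : Ψinv * Ψ11 = 1 := hright
    rw [mul_assoc Ψinv (↑u⁻¹ : ell2 m →L[ℝ] ell2 m),
      ← mul_assoc (↑u⁻¹ : ell2 m →L[ℝ] ell2 m) (1 + A) Ψ11, ← huval, u.inv_mul, one_mul, h2]
  · exact Causal.comp (h21.add (Causal.comp h22 hG))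
      (Causal.comp hinv hinv_causal)
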